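/- (Admissibility part of Lemma 4.7.) Define g₁ : ℝ² → [0,∞] by g₁(y) = ( |y| · log(1/|y|) · log(log(1/|y|)) )⁻¹ when 0 < |y| < e⁻², g₁(0) = ∞, and g₁(y) = 0 when |y| ≥ e⁻². Then for every 1-Lipschitz curve γ : [0, e⁻²] → ℝ² with γ(0) = 0, one has ∫₀^{e⁻²} g₁(γ(t)) dt = ∞ (integral taken in [0,∞]). Consequently, for every ε > 0 the function g_ε = ε · g₁ satisfies ∫_γ g_ε ds = ∞ ≥ 1 along every rectifiable curve joining 0 to the circle {|y| = e⁻²}, parametrized by arclength. -/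

import Mathlib

open MeasureTheory Set
open scoped ENNReal Real Topology

noncomputable section

def auxF (x : ℝ) : ℝ := x * Real.log (1/x) * Real.log (Real.log (1/x))

lemma auxF_eq (x : ℝ) : auxF x = x * (-Real.log x) * Real.log (-Real.log x) := by
  simp [auxF, one_div, Real.log_inv]

lemma auxF_hasDeriv {x : ℝ} (hx : 0 < x) (hx1 : x < 1) :
    HasDerivAt auxF ((-Real.log x - 1) * Real.log (-Real.log x) - 1) x := by
  have hx0 : x ≠ 0 := ne_of_gt hx
  have hLpos : 0 < -Real.log x := by
    have := Real.log_neg hx hx1; linarith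
  have hL : HasDerivAt (fun y => -Real.log y) (-x⁻¹) x := (Real.hasDerivAt_log hx0).neg
  have hM : HasDerivAt (fun y => Real.log (-Real.log y)) (-x⁻¹ / (-Real.log x)) x :=
    hL.log (ne_of_gt hLpos)
  have hid : HasDerivAt (fun y : ℝ => y * (-Real.log y))
      (1 * (-Real.log x) + x * (-x⁻¹)) x := (hasDerivAt_id x).mul hL
  have h : HasDerivAt (fun y : ℝ => y * (-Real.log y) * Real.log (-Real.log y)) _ x :=
    hid.mul hM
  have heq : (fun y : ℝ => y * (-Real.log y) * Real.log (-Real.log y)) = auxF := by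
    funext y; rw [auxF_eq]
  rw [heq] at h
  convert h using 1
  have hLne : Real.log x ≠ 0 := by intro h0; rw [h0] at hLpos; simp at hLpos
  field_simp
  ring

lemma log_three_ge_one : (1:ℝ) ≤ Real.log 3 := by
  rw [Real.le_log_iff_exp_le (by norm_num)]
  calc Real.exp 1 ≤ 2.7182818286 := (Real.exp_one_lt_d9).le
    _ ≤ 3 := by norm_num

lemma auxF_bounds {x : ℝ} (hx : 0 < x) (hx3 : x ≤ Real.exp (-3)) :
    3 ≤ -Real.log x ∧ 1 ≤ Real.log (-Real.log x) := by
  have h1 : Real.log x ≤ -3 := by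
    calc Real.log x ≤ Real.log (Real.exp (-3)) := Real.log_le_log hx hx3
      _ = -3 := Real.log_exp _
  constructor
  · linarith
  · calc (1:ℝ) ≤ Real.log 3 := log_three_ge_one
      _ ≤ Real.log (-Real.log x) := Real.log_le_log (by norm_num) (by linarith)

lemma auxF_pos {x : ℝ} (hx : 0 < x) (hx3 : x ≤ Real.exp (-3)) : 0 < auxF x := by
  obtain ⟨h1, h2⟩ := auxF_bounds hx hx3
  rw [auxF_eq]
  positivity

lemma auxF_continuousOn {a b : ℝ} (ha : 0 < a) (hb : b < 1) :
    ContinuousOn auxF (Icc a b) := by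
  intro x hx
  have hx0 : x ≠ 0 := ne_of_gt (lt_of_lt_of_le ha hx.1)
  have hx1 : x < 1 := lt_of_le_of_lt hx.2 hb
  have hLpos : 0 < -Real.log x := by
    have := Real.log_neg (lt_of_lt_of_le ha hx.1) hx1; linarith
  have : ContinuousAt auxF x := by
    have hlog : ContinuousAt Real.log x := Real.continuousAt_log hx0
    have hL : ContinuousAt (fun y => -Real.log y) x := hlog.neg
    have hM : ContinuousAt (fun y => Real.log (-Real.log y)) x :=
      hL.log (ne_of_gt hLpos)
    have : ContinuousAt (fun y : ℝ => y * (-Real.log y) * Real.log (-Real.log y)) x :=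
      ((continuousAt_id.mul hL)).mul hM
    have heq : (fun y : ℝ => y * (-Real.log y) * Real.log (-Real.log y)) = auxF := by
      funext y; rw [auxF_eq]
    rwa [heq] at this
  exact this.continuousWithinAt

lemma auxF_mono {r t : ℝ} (hr : 0 < r) (hrt : r ≤ t) (ht : t ≤ Real.exp (-3)) :
    auxF r ≤ auxF t := by
  have he1 : Real.exp (-3) < 1 := by
    rw [Real.exp_lt_one_iff]; norm_num
  have key : ∀ x ∈ interior (Icc r t), 0 < x ∧ x ≤ Real.exp (-3) := by
    intro x hx
    rw [interior_Icc] at hx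
    exact ⟨lt_trans hr hx.1, le_of_lt (lt_of_lt_of_le hx.2 ht)⟩
  have hmono : MonotoneOn auxF (Icc r t) := by
    apply monotoneOn_of_deriv_nonneg (convex_Icc r t)
    · exact auxF_continuousOn hr (lt_of_le_of_lt ht he1)
    · intro x hx
      obtain ⟨hx0, hx3⟩ := key x hx
      exact (auxF_hasDeriv hx0 (lt_of_le_of_lt hx3 he1)).differentiableAt.differentiableWithinAt
    · intro x hx
      obtain ⟨hx0, hx3⟩ := key x hx
      have hd := auxF_hasDeriv hx0 (lt_of_le_of_lt hx3 he1)
      rw [hd.deriv]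
      obtain ⟨h1, h2⟩ := auxF_bounds hx0 hx3
      nlinarith
  exact hmono (left_mem_Icc.2 hrt) (right_mem_Icc.2 hrt) hrt

def auxG (x : ℝ) : ℝ := -Real.log (Real.log (-Real.log x))

lemma auxG_hasDeriv {x : ℝ} (hx : 0 < x) (hx3 : x ≤ Real.exp (-3)) :
    HasDerivAt auxG ((auxF x)⁻¹) x := by
  have hx0 : x ≠ 0 := ne_of_gt hx
  obtain ⟨h1, h2⟩ := auxF_bounds hx hx3
  have hLpos : 0 < -Real.log x := by linarith
  have hMpos : 0 < Real.log (-Real.log x) := by linarith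
  have hL : HasDerivAt (fun y => -Real.log y) (-x⁻¹) x := (Real.hasDerivAt_log hx0).neg
  have hM : HasDerivAt (fun y => Real.log (-Real.log y)) (-x⁻¹ / (-Real.log x)) x :=
    hL.log (ne_of_gt hLpos)
  have h : HasDerivAt (fun y : ℝ => -Real.log (Real.log (-Real.log y))) _ x :=
    (hM.log (ne_of_gt hMpos)).neg
  have heq : (fun y : ℝ => -Real.log (Real.log (-Real.log y))) = auxG := rfl
  rw [heq] at h
  convert h using 1
  rw [auxF_eq]
  field_simp

lemma integral_inv_auxF {a : ℝ} (ha : 0 < a) (hac : a ≤ Real.exp (-3)) :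
    ∫ t in a..(Real.exp (-3)), (auxF t)⁻¹ =
      Real.log (Real.log (-Real.log a)) - Real.log (Real.log 3) := by
  have he1 : Real.exp (-3) < 1 := by rw [Real.exp_lt_one_iff]; norm_num
  have hcont : ContinuousOn (fun t => (auxF t)⁻¹) (Icc a (Real.exp (-3))) := by
    apply (auxF_continuousOn ha he1).inv₀
    intro x hx
    exact ne_of_gt (auxF_pos (lt_of_lt_of_le ha hx.1) hx.2)
  have huIcc : uIcc a (Real.exp (-3)) = Icc a (Real.exp (-3)) := uIcc_of_le hac
  have hint : IntervalIntegrable (fun t => (auxF t)⁻¹) volume a (Real.exp (-3)) := by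
    rw [intervalIntegrable_iff_integrableOn_Icc_of_le hac]
    exact hcont.integrableOn_compact isCompact_Icc
  have hftc := intervalIntegral.integral_eq_sub_of_hasDerivAt
    (f := auxG) (f' := fun t => (auxF t)⁻¹) (a := a) (b := Real.exp (-3))
    (fun x hx => by
      rw [huIcc] at hx
      exact auxG_hasDeriv (lt_of_lt_of_le ha hx.1) hx.2) hint
  rw [hftc]
  have : auxG (Real.exp (-3)) = -Real.log (Real.log 3) := by
    unfold auxG
    rw [Real.log_exp]
    norm_num
  rw [this]
  unfold auxG
  ring

lemma lintegral_inv_auxF_top :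
    ∫⁻ t in Ioc (0:ℝ) (Real.exp (-3)), ENNReal.ofReal (auxF t)⁻¹ = ⊤ := by
  apply ENNReal.eq_top_of_forall_nnreal_le
  intro r
  obtain ⟨n, hn⟩ := exists_nat_gt ((r:ℝ) + Real.log (Real.log 3))
  set a := Real.exp (-(Real.exp (Real.exp ((n:ℝ) + 1)))) with ha_def
  have ha : 0 < a := Real.exp_pos _
  have hexp2 : (3:ℝ) ≤ Real.exp (Real.exp ((n:ℝ) + 1)) := by
    have h1 : (2:ℝ) ≤ Real.exp ((n:ℝ) + 1) := by
      have h2 : (1:ℝ) ≤ (n:ℝ) + 1 := by have : (0:ℝ) ≤ (n:ℝ) := Nat.cast_nonneg n; linarith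
      have := Real.add_one_le_exp (1:ℝ)
      have := Real.exp_le_exp.2 h2
      linarith
    have := Real.add_one_le_exp (2:ℝ)
    have := Real.exp_le_exp.2 h1
    linarith
  have hac : a ≤ Real.exp (-3) := Real.exp_le_exp.2 (by linarith)
  have hval : ∫ t in a..(Real.exp (-3)), (auxF t)⁻¹ =
      ((n:ℝ) + 1) - Real.log (Real.log 3) := by
    rw [integral_inv_auxF ha hac, ha_def, Real.log_exp, neg_neg, Real.log_exp,
      Real.log_exp]
  have he1 : Real.exp (-3) < 1 := by rw [Real.exp_lt_one_iff]; norm_num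
  have hcont : ContinuousOn (fun t => (auxF t)⁻¹) (Icc a (Real.exp (-3))) := by
    apply (auxF_continuousOn ha he1).inv₀
    intro x hx
    exact ne_of_gt (auxF_pos (lt_of_lt_of_le ha hx.1) hx.2)
  have hintI : IntegrableOn (fun t => (auxF t)⁻¹) (Ioc a (Real.exp (-3))) volume :=
    (hcont.integrableOn_compact isCompact_Icc).mono_set Ioc_subset_Icc_self
  have hnonneg : 0 ≤ᵐ[volume.restrict (Ioc a (Real.exp (-3)))] fun t => (auxF t)⁻¹ := by
    rw [Filter.EventuallyLE, ae_restrict_iff' measurableSet_Ioc]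
    apply Filter.Eventually.of_forall
    intro x hx
    exact le_of_lt (inv_pos.2 (auxF_pos (lt_trans ha hx.1) hx.2))
  have hofReal : ENNReal.ofReal (∫ t in Ioc a (Real.exp (-3)), (auxF t)⁻¹) =
      ∫⁻ t in Ioc a (Real.exp (-3)), ENNReal.ofReal (auxF t)⁻¹ :=
    MeasureTheory.ofReal_integral_eq_lintegral_ofReal hintI hnonneg
  have hset : ∫ t in Ioc a (Real.exp (-3)), (auxF t)⁻¹ =
      ((n:ℝ) + 1) - Real.log (Real.log 3) := by
    rw [← intervalIntegral.integral_of_le hac, hval]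
  calc (r : ℝ≥0∞) = ENNReal.ofReal (r:ℝ) := (ENNReal.ofReal_coe_nnreal (p := r)).symm
    _ ≤ ENNReal.ofReal (((n:ℝ) + 1) - Real.log (Real.log 3)) :=
        ENNReal.ofReal_le_ofReal (by linarith)
    _ = ∫⁻ t in Ioc a (Real.exp (-3)), ENNReal.ofReal (auxF t)⁻¹ := by
        rw [← hset, hofReal]
    _ ≤ ∫⁻ t in Ioc (0:ℝ) (Real.exp (-3)), ENNReal.ofReal (auxF t)⁻¹ :=
        lintegral_mono_set (Ioc_subset_Ioc_left (le_of_lt ha))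



/-- The plane `ℝ²` as a Euclidean space. -/
abbrev E2 : Type := EuclideanSpace ℝ (Fin 2)

/-- **Admissibility part of Lemma 4.7.** The function
`g₁(y) = (|y| log(1/|y|) log log(1/|y|))⁻¹` on the punctured disc of radius `e⁻²`
(with `g₁(0) = ∞` and `g₁ = 0` outside) has infinite line integral along every
1-Lipschitz curve starting at the origin; consequently every positive multiple
`g_ε = ε g₁` has infinite (hence `≥ 1`) line integral along every arclength-parametrized
rectifiable curve joining `0` to the circle of radius `e⁻²`. -/
theorem g_one_admissible
    (g₁ : E2 → ℝ≥0∞)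
    (hg₁ : ∀ y : E2, g₁ y =
      if ‖y‖ = 0 then ⊤
      else if ‖y‖ < Real.exp (-2) then
        ENNReal.ofReal ((‖y‖ * Real.log (1 / ‖y‖) * Real.log (Real.log (1 / ‖y‖)))⁻¹)
      else 0) :
    (∀ γ : ℝ → E2, LipschitzOnWith 1 γ (Icc 0 (Real.exp (-2))) → γ 0 = 0 →
      ∫⁻ t in Icc (0 : ℝ) (Real.exp (-2)), g₁ (γ t) = ⊤) ∧
    (∀ ε : ℝ, 0 < ε → ∀ L : ℝ, 0 ≤ L → ∀ γ : ℝ → E2,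
      LipschitzOnWith 1 γ (Icc 0 L) → γ 0 = 0 → ‖γ L‖ = Real.exp (-2) →
      ∫⁻ t in Icc (0 : ℝ) L, ENNReal.ofReal ε * g₁ (γ t) = ⊤ ∧
      (1 : ℝ≥0∞) ≤ ∫⁻ t in Icc (0 : ℝ) L, ENNReal.ofReal ε * g₁ (γ t)) := by
  have he32 : Real.exp (-3) ≤ Real.exp (-2) := Real.exp_le_exp.2 (by norm_num)
  have part1 : ∀ γ : ℝ → E2, LipschitzOnWith 1 γ (Icc 0 (Real.exp (-2))) → γ 0 = 0 →
      ∫⁻ t in Icc (0 : ℝ) (Real.exp (-2)), g₁ (γ t) = ⊤ := by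
    intro γ hγ hγ0
    have key : ∀ t ∈ Ioc (0:ℝ) (Real.exp (-3)),
        ENNReal.ofReal (auxF t)⁻¹ ≤ g₁ (γ t) := by
      intro t ht
      have ht0 : 0 < t := ht.1
      have ht3 : t ≤ Real.exp (-3) := ht.2
      have htmem : t ∈ Icc (0:ℝ) (Real.exp (-2)) := ⟨le_of_lt ht0, le_trans ht3 he32⟩
      have h0mem : (0:ℝ) ∈ Icc (0:ℝ) (Real.exp (-2)) :=
        ⟨le_refl _, le_of_lt (Real.exp_pos _)⟩
      have hnorm : ‖γ t‖ ≤ t := by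
        have := hγ.dist_le_mul t htmem 0 h0mem
        rw [hγ0] at this
        simpa [dist_eq_norm, abs_of_pos ht0] using this
      rw [hg₁ (γ t)]
      by_cases h0 : ‖γ t‖ = 0
      · rw [if_pos h0]; exact le_top
      · rw [if_neg h0]
        have hpos : 0 < ‖γ t‖ := lt_of_le_of_ne (norm_nonneg _) (Ne.symm h0)
        have hlt : ‖γ t‖ < Real.exp (-2) :=
          lt_of_le_of_lt (le_trans hnorm ht3) (lt_of_lt_of_le (by
            exact Real.exp_lt_exp.2 (by norm_num)) (le_refl _))
        rw [if_pos hlt]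
        apply ENNReal.ofReal_le_ofReal
        have hfle : auxF ‖γ t‖ ≤ auxF t := auxF_mono hpos hnorm ht3
        have hfpos : 0 < auxF ‖γ t‖ :=
          auxF_pos hpos (le_trans hnorm ht3)
        have : (auxF t)⁻¹ ≤ (auxF ‖γ t‖)⁻¹ := by
          apply inv_anti₀ hfpos hfle
        simpa [auxF] using this
    rw [← top_le_iff]
    calc (⊤:ℝ≥0∞) = ∫⁻ t in Ioc (0:ℝ) (Real.exp (-3)), ENNReal.ofReal (auxF t)⁻¹ :=
          lintegral_inv_auxF_top.symm
      _ ≤ ∫⁻ t in Ioc (0:ℝ) (Real.exp (-3)), g₁ (γ t) := by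
          apply lintegral_mono_ae
          rw [ae_restrict_iff' measurableSet_Ioc]
          exact Filter.Eventually.of_forall key
      _ ≤ ∫⁻ t in Icc (0 : ℝ) (Real.exp (-2)), g₁ (γ t) :=
          lintegral_mono_set (fun x hx => ⟨le_of_lt hx.1, le_trans hx.2 he32⟩)
  refine ⟨part1, ?_⟩
  intro ε hε L hL γ hγ hγ0 hγL
  have hL2 : Real.exp (-2) ≤ L := by
    have hLmem : L ∈ Icc (0:ℝ) L := ⟨hL, le_refl _⟩
    have h0mem : (0:ℝ) ∈ Icc (0:ℝ) L := ⟨le_refl _, hL⟩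
    have := hγ.dist_le_mul L hLmem 0 h0mem
    rw [hγ0] at this
    rw [← hγL]
    simpa [dist_eq_norm, abs_of_nonneg hL] using this
  have hsub : Icc (0:ℝ) (Real.exp (-2)) ⊆ Icc 0 L := Icc_subset_Icc_right hL2
  have hγ' : LipschitzOnWith 1 γ (Icc 0 (Real.exp (-2))) := hγ.mono hsub
  have h1 := part1 γ hγ' hγ0
  have htop : ∫⁻ t in Icc (0 : ℝ) L, ENNReal.ofReal ε * g₁ (γ t) = ⊤ := by
    rw [← top_le_iff]
    calc (⊤:ℝ≥0∞) = ENNReal.ofReal ε * ⊤ := by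
          rw [ENNReal.mul_top (by simpa [ENNReal.ofReal_eq_zero] using not_le.2 hε)]
      _ = ENNReal.ofReal ε * ∫⁻ t in Icc (0 : ℝ) (Real.exp (-2)), g₁ (γ t) := by rw [h1]
      _ = ∫⁻ t in Icc (0 : ℝ) (Real.exp (-2)), ENNReal.ofReal ε * g₁ (γ t) :=
          (lintegral_const_mul' _ _ ENNReal.ofReal_ne_top).symm
      _ ≤ ∫⁻ t in Icc (0 : ℝ) L, ENNReal.ofReal ε * g₁ (γ t) :=
          lintegral_mono_set hsub
  exact ⟨htop, by rw [htop]; exact le_top⟩
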